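/- (Estimator Lyapunov function implies robust global exponential stability; Theorem 1 of the extended paper, sequence form.) Let c1, c2, c3, c4 > 0 with c3 < c2. Set λ_e := √(1 − c3/c2) ∈ (0,1), c_{e,1} := √(c2/c1), and c_{e,2} := √(c4/c1). Then for every triple of sequences e : ℕ → ℝ^{n}, w̃ : ℕ → ℝ^{m}, and V : ℕ → ℝ satisfying, for all k ∈ ℕ, c1‖e(k)‖² ≤ V(k) ≤ c2‖e(k)‖² and V(k+1) ≤ V(k) − c3‖e(k)‖² + c4‖w̃(k)‖², one has ‖e(k)‖ ≤ c_{e,1} λ_e^k ‖e(0)‖ + c_{e,2} Σ_{j=1}^{k} λ_e^{j−1} ‖w̃(k−j)‖ for all k ∈ ℕ. -/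

import Mathlib

open scoped BigOperators

noncomputable section

abbrev Vec (n : ℕ) : Type := EuclideanSpace ℝ (Fin n)

lemma sqrt_sum_le {ι : Type*} (s : Finset ι) (f : ι → ℝ) (hf : ∀ i, 0 ≤ f i) :
    Real.sqrt (∑ i ∈ s, f i) ≤ ∑ i ∈ s, Real.sqrt (f i) := by
  classical
  induction s using Finset.induction with
  | empty => simp
  | @insert a s hx ih =>
    rw [Finset.sum_insert hx, Finset.sum_insert hx]
    calc Real.sqrt (f a + ∑ i ∈ s, f i) ≤ Real.sqrt (f a) + Real.sqrt (∑ i ∈ s, f i) := by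
          have h1 := hf a
          have h2 : (0:ℝ) ≤ ∑ i ∈ s, f i := Finset.sum_nonneg fun i _ => hf i
          have := Real.sqrt_nonneg (f a)
          have := Real.sqrt_nonneg (∑ i ∈ s, f i)
          nlinarith [Real.sq_sqrt h1, Real.sq_sqrt h2, Real.sqrt_nonneg (f a + ∑ i ∈ s, f i),
            Real.sq_sqrt (add_nonneg h1 h2), mul_nonneg (Real.sqrt_nonneg (f a)) (Real.sqrt_nonneg (∑ i ∈ s, f i))]
      _ ≤ Real.sqrt (f a) + ∑ i ∈ s, Real.sqrt (f i) := by linarith [ih]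

/-- **Estimator Lyapunov function implies robust global exponential stability
(Theorem 1 of the extended paper, sequence form).** -/
theorem estimator_lyapunov_implies_rges
    {n m : ℕ} (c1 c2 c3 c4 : ℝ)
    (hc1 : 0 < c1) (hc2 : 0 < c2) (hc3 : 0 < c3) (hc4 : 0 < c4) (hc32 : c3 < c2)
    (e : ℕ → Vec n) (wt : ℕ → Vec m) (V : ℕ → ℝ)
    (hlow : ∀ k, c1 * ‖e k‖ ^ 2 ≤ V k)
    (hup : ∀ k, V k ≤ c2 * ‖e k‖ ^ 2)
    (hdec : ∀ k, V (k + 1) ≤ V k - c3 * ‖e k‖ ^ 2 + c4 * ‖wt k‖ ^ 2) :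
    ∀ k : ℕ, ‖e k‖ ≤ Real.sqrt (c2 / c1) * Real.sqrt (1 - c3 / c2) ^ k * ‖e 0‖ +
      Real.sqrt (c4 / c1) *
        ∑ j ∈ Finset.Icc 1 k, Real.sqrt (1 - c3 / c2) ^ (j - 1) * ‖wt (k - j)‖ := by
  obtain ⟨L, hL⟩ : ∃ L : ℝ, L = 1 - c3 / c2 := ⟨_, rfl⟩
  rw [← hL]
  have hL0 : 0 < L := by
    have : c3 / c2 < 1 := (div_lt_one hc2).mpr hc32
    rw [hL]; linarith
  have hLs : Real.sqrt L ^ 2 = L := Real.sq_sqrt hL0.le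
  -- Key bound on V
  have key : ∀ k, V k ≤ c2 * L ^ k * ‖e 0‖ ^ 2 +
      c4 * ∑ j ∈ Finset.Icc 1 k, L ^ (j - 1) * ‖wt (k - j)‖ ^ 2 := by
    intro k
    induction k with
    | zero => simpa using hup 0
    | succ k ih =>
      have hstep : V (k + 1) ≤ L * V k + c4 * ‖wt k‖ ^ 2 := by
        have h1 := hdec k
        have h2 : c3 / c2 * V k ≤ c3 * ‖e k‖ ^ 2 := by
          have := hup k
          rw [div_mul_eq_mul_div, div_le_iff₀ hc2]
          nlinarith
        have h3 : V k - c3 * ‖e k‖ ^ 2 ≤ L * V k := by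
          rw [hL]; ring_nf; ring_nf at h2; linarith
        linarith
      have hVk : L * V k ≤ L * (c2 * L ^ k * ‖e 0‖ ^ 2 +
          c4 * ∑ j ∈ Finset.Icc 1 k, L ^ (j - 1) * ‖wt (k - j)‖ ^ 2) :=
        mul_le_mul_of_nonneg_left ih hL0.le
      have hsum : ∀ N : ℕ, (∑ j ∈ Finset.Icc 1 N, L ^ (j - 1) * ‖wt (N - j)‖ ^ 2)
          = ∑ i ∈ Finset.range N, L ^ i * ‖wt (N - 1 - i)‖ ^ 2 := by
        intro N
        rw [← Finset.Ico_add_one_right_eq_Icc, Finset.sum_Ico_eq_sum_range]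
        apply Finset.sum_congr rfl
        intro i _
        have h1 : 1 + i - 1 = i := by omega
        have h2 : N - (1 + i) = N - 1 - i := by omega
        rw [h1, h2]
      rw [hsum k] at hVk
      rw [hsum, Finset.sum_range_succ']
      have hre : ∀ i ∈ Finset.range k, L * (L ^ i * ‖wt (k - 1 - i)‖ ^ 2)
          = L ^ (i + 1) * ‖wt (k + 1 - 1 - (i + 1))‖ ^ 2 := by
        intro i _
        have : k + 1 - 1 - (i + 1) = k - 1 - i := by omega
        rw [this]; ring
      calc V (k + 1) ≤ L * V k + c4 * ‖wt k‖ ^ 2 := hstep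
        _ ≤ L * (c2 * L ^ k * ‖e 0‖ ^ 2 +
              c4 * ∑ i ∈ Finset.range k, L ^ i * ‖wt (k - 1 - i)‖ ^ 2) + c4 * ‖wt k‖ ^ 2 := by
            linarith
        _ = c2 * L ^ (k + 1) * ‖e 0‖ ^ 2 +
            c4 * ((∑ i ∈ Finset.range k, L ^ (i + 1) * ‖wt (k + 1 - 1 - (i + 1))‖ ^ 2) +
              L ^ 0 * ‖wt (k + 1 - 1 - 0)‖ ^ 2) := by
            rw [← Finset.sum_congr rfl hre]
            rw [mul_add, mul_add, Finset.mul_sum, Finset.mul_sum]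
            have hc : ∀ x ∈ Finset.range k, L * (c4 * (L ^ x * ‖wt (k - 1 - x)‖ ^ 2))
                = c4 * (L * (L ^ x * ‖wt (k - 1 - x)‖ ^ 2)) := fun x _ => by ring
            rw [Finset.sum_congr rfl hc, ← Finset.mul_sum, ← Finset.mul_sum]
            simp only [pow_zero, one_mul, Nat.add_sub_cancel, Nat.sub_zero]
            ring
  intro k
  -- from key to the norm bound
  have hVb := key k
  have he2 : ‖e k‖ ^ 2 ≤ (c2 / c1) * L ^ k * ‖e 0‖ ^ 2 +
      (c4 / c1) * ∑ j ∈ Finset.Icc 1 k, L ^ (j - 1) * ‖wt (k - j)‖ ^ 2 := by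
    have := hlow k
    rw [div_mul_eq_mul_div, div_mul_eq_mul_div, div_mul_eq_mul_div, ← add_div,
      le_div_iff₀ hc1]
    nlinarith
  have hterm : ∀ j : ℕ, (0:ℝ) ≤ L ^ (j - 1) * ‖wt (k - j)‖ ^ 2 := fun j =>
    mul_nonneg (pow_nonneg hL0.le _) (sq_nonneg _)
  have hsum0 : (0:ℝ) ≤ ∑ j ∈ Finset.Icc 1 k, L ^ (j - 1) * ‖wt (k - j)‖ ^ 2 :=
    Finset.sum_nonneg fun j _ => hterm j
  have h1 : (0:ℝ) ≤ (c2 / c1) * L ^ k * ‖e 0‖ ^ 2 :=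
    mul_nonneg (mul_nonneg (div_nonneg hc2.le hc1.le) (pow_nonneg hL0.le _)) (sq_nonneg _)
  have h2 : (0:ℝ) ≤ (c4 / c1) * ∑ j ∈ Finset.Icc 1 k, L ^ (j - 1) * ‖wt (k - j)‖ ^ 2 :=
    mul_nonneg (div_nonneg hc4.le hc1.le) hsum0
  have hek : ‖e k‖ ≤ Real.sqrt ((c2 / c1) * L ^ k * ‖e 0‖ ^ 2 +
      (c4 / c1) * ∑ j ∈ Finset.Icc 1 k, L ^ (j - 1) * ‖wt (k - j)‖ ^ 2) := by
    rw [← Real.sqrt_sq (norm_nonneg (e k))]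
    exact Real.sqrt_le_sqrt he2
  have hsplit : Real.sqrt ((c2 / c1) * L ^ k * ‖e 0‖ ^ 2 +
      (c4 / c1) * ∑ j ∈ Finset.Icc 1 k, L ^ (j - 1) * ‖wt (k - j)‖ ^ 2)
      ≤ Real.sqrt ((c2 / c1) * L ^ k * ‖e 0‖ ^ 2) +
        Real.sqrt ((c4 / c1) * ∑ j ∈ Finset.Icc 1 k, L ^ (j - 1) * ‖wt (k - j)‖ ^ 2) := by
    nlinarith [Real.sq_sqrt h1, Real.sq_sqrt h2, Real.sq_sqrt (add_nonneg h1 h2),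
      Real.sqrt_nonneg ((c2 / c1) * L ^ k * ‖e 0‖ ^ 2),
      Real.sqrt_nonneg ((c4 / c1) * ∑ j ∈ Finset.Icc 1 k, L ^ (j - 1) * ‖wt (k - j)‖ ^ 2),
      Real.sqrt_nonneg ((c2 / c1) * L ^ k * ‖e 0‖ ^ 2 +
        (c4 / c1) * ∑ j ∈ Finset.Icc 1 k, L ^ (j - 1) * ‖wt (k - j)‖ ^ 2),
      mul_nonneg (Real.sqrt_nonneg ((c2 / c1) * L ^ k * ‖e 0‖ ^ 2))
        (Real.sqrt_nonneg ((c4 / c1) * ∑ j ∈ Finset.Icc 1 k, L ^ (j - 1) * ‖wt (k - j)‖ ^ 2))]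
  have hA : Real.sqrt ((c2 / c1) * L ^ k * ‖e 0‖ ^ 2)
      = Real.sqrt (c2 / c1) * Real.sqrt L ^ k * ‖e 0‖ := by
    have : (c2 / c1) * L ^ k * ‖e 0‖ ^ 2
        = (Real.sqrt (c2 / c1) * Real.sqrt L ^ k * ‖e 0‖) ^ 2 := by
      rw [mul_pow, mul_pow, ← pow_mul, mul_comm k 2, pow_mul,
        hLs, Real.sq_sqrt (div_nonneg hc2.le hc1.le)]
    rw [this, Real.sqrt_sq (by positivity)]
  have hB : Real.sqrt ((c4 / c1) * ∑ j ∈ Finset.Icc 1 k, L ^ (j - 1) * ‖wt (k - j)‖ ^ 2)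
      ≤ Real.sqrt (c4 / c1) * ∑ j ∈ Finset.Icc 1 k, Real.sqrt L ^ (j - 1) * ‖wt (k - j)‖ := by
    rw [Real.sqrt_mul (div_nonneg hc4.le hc1.le)]
    apply mul_le_mul_of_nonneg_left _ (Real.sqrt_nonneg _)
    calc Real.sqrt (∑ j ∈ Finset.Icc 1 k, L ^ (j - 1) * ‖wt (k - j)‖ ^ 2)
        ≤ ∑ j ∈ Finset.Icc 1 k, Real.sqrt (L ^ (j - 1) * ‖wt (k - j)‖ ^ 2) :=
          sqrt_sum_le _ _ hterm
      _ = ∑ j ∈ Finset.Icc 1 k, Real.sqrt L ^ (j - 1) * ‖wt (k - j)‖ := by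
          apply Finset.sum_congr rfl
          intro j _
          have : L ^ (j - 1) * ‖wt (k - j)‖ ^ 2
              = (Real.sqrt L ^ (j - 1) * ‖wt (k - j)‖) ^ 2 := by
            rw [mul_pow, ← pow_mul, mul_comm (j-1) 2, pow_mul, hLs]
          rw [this, Real.sqrt_sq (by positivity)]
  calc ‖e k‖ ≤ _ := hek
    _ ≤ _ := hsplit
    _ ≤ Real.sqrt (c2 / c1) * Real.sqrt L ^ k * ‖e 0‖ +
        Real.sqrt (c4 / c1) * ∑ j ∈ Finset.Icc 1 k, Real.sqrt L ^ (j - 1) * ‖wt (k - j)‖ := by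
      rw [hA]; linarith [hB]
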